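/- arXiv:2011.13255 — 4 statements merged into one kernel-verified Lean document; each statement's English description precedes it below -/
import Mathlib

section
/- Suppose there exist k ∈ ℤ⁺, matrices α_ℓ ∈ ℝ^{n×n} for ℓ = 0,…,k, and matrices b_ℓ ∈ ℝ^{n×m} for ℓ = 1,…,k+1 such that f̂^{k+1}(x,0) = Σ_{ℓ=0}^k α_ℓ f̂^ℓ(x,0) for all x, and f̂^ℓ(x,u) = f̂^ℓ(x,0) + b_ℓ u for all (x,u) and ℓ = 1,…,k+1. Then f̂^{k+2}(x,u) = f̂^{k+2}(x,0) + b u for some constant matrix b ∈ ℝ^{n×m}, namely b = Σ_{ℓ=0}^k α_ℓ b_{ℓ+1}. -/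
open Matrix Finset

def fhat {V U : Type*} [Zero U] (f : V → U → V) : ℕ → V → U → V
  | 0, x, _ => x
  | 1, x, u => f x u
  | (ℓ + 2), x, u => f (fhat f (ℓ + 1) x u) 0

lemma fhat_shift {V U : Type*} [Zero U] (f : V → U → V) :
    ∀ ℓ x u, fhat f (ℓ + 1) x u = fhat f ℓ (f x u) 0 := by
  intro ℓ
  induction ℓ with
  | zero => intro x u; rfl
  | succ ℓ ih =>
    intro x u
    show f (fhat f (ℓ + 1) x u) 0 = fhat f (ℓ + 1) (f x u) 0
    rw [ih]
    cases ℓ with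
    | zero => rfl
    | succ ℓ' => rfl

lemma sum_mulVec' {n m : ℕ} {s : Finset ℕ} (A : ℕ → Matrix (Fin n) (Fin m) ℝ) (u : Fin m → ℝ) :
    ∑ ℓ ∈ s, (A ℓ).mulVec u = (∑ ℓ ∈ s, A ℓ).mulVec u := by
  ext i
  simp only [Finset.sum_apply, Matrix.mulVec, dotProduct, Matrix.sum_apply,
    Finset.sum_mul]
  exact Finset.sum_comm

theorem stmt1 {n m k : ℕ} (f : (Fin n → ℝ) → (Fin m → ℝ) → (Fin n → ℝ))
    (α : ℕ → Matrix (Fin n) (Fin n) ℝ) (b : ℕ → Matrix (Fin n) (Fin m) ℝ)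
    (h1 : ∀ x, fhat f (k + 1) x 0 = ∑ ℓ ∈ range (k + 1), (α ℓ).mulVec (fhat f ℓ x 0))
    (h2 : ∀ ℓ, 1 ≤ ℓ → ℓ ≤ k + 1 → ∀ x u, fhat f ℓ x u = fhat f ℓ x 0 + (b ℓ).mulVec u) :
    ∀ x u, fhat f (k + 2) x u
      = fhat f (k + 2) x 0 + (∑ ℓ ∈ range (k + 1), α ℓ * b (ℓ + 1)).mulVec u := by
  intro x u
  have key : ∀ v : Fin m → ℝ, fhat f (k + 2) x v
      = ∑ ℓ ∈ range (k + 1), (α ℓ).mulVec (fhat f (ℓ + 1) x v) := by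
    intro v
    have : fhat f (k + 2) x v = fhat f (k + 1) (f x v) 0 := fhat_shift f (k + 1) x v
    rw [this, h1]
    refine Finset.sum_congr rfl fun ℓ _ => ?_
    rw [fhat_shift]
  rw [key u, key 0]
  have : ∀ ℓ ∈ range (k + 1),
      (α ℓ).mulVec (fhat f (ℓ + 1) x u)
        = (α ℓ).mulVec (fhat f (ℓ + 1) x 0) + (α ℓ * b (ℓ + 1)).mulVec u := by
    intro ℓ hℓ
    rw [h2 (ℓ + 1) (Nat.le_add_left 1 ℓ) (by have := Finset.mem_range.mp hℓ; omega : ℓ + 1 ≤ k + 1) x u,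
      Matrix.mulVec_add, Matrix.mulVec_mulVec]
  rw [Finset.sum_congr rfl this, Finset.sum_add_distrib, sum_mulVec']
end

section
/- Suppose for every initial state x and control sequence u the solution of x(t+1) = f(x(t),u(t)) satisfies φ(t; x, u) = C φ̃(t; T(x), u) for all t, where φ̃ solves x̃(t+1) = A x̃(t) + B u(t) with x̃(0) = T(x). Then for all k ∈ ℤ⁺ and all (x,u): C A^k (A T(x) + B u − T(f(x,u))) = 0. -/
open Matrix

def sol {n m : ℕ} (f : (Fin n → ℝ) → (Fin m → ℝ) → (Fin n → ℝ))
    (x : Fin n → ℝ) (u : ℕ → Fin m → ℝ) : ℕ → Fin n → ℝ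
  | 0 => x
  | (t + 1) => f (sol f x u t) (u t)

def lsol {nt m : ℕ} (A : Matrix (Fin nt) (Fin nt) ℝ) (B : Matrix (Fin nt) (Fin m) ℝ)
    (xt : Fin nt → ℝ) (u : ℕ → Fin m → ℝ) : ℕ → Fin nt → ℝ
  | 0 => xt
  | (t + 1) => A.mulVec (lsol A B xt u t) + B.mulVec (u t)

lemma sol_shift {n m : ℕ} (f : (Fin n → ℝ) → (Fin m → ℝ) → (Fin n → ℝ))
    (x : Fin n → ℝ) (u : ℕ → Fin m → ℝ) (t : ℕ) :
    sol f x u (t + 1) = sol f (f x (u 0)) (fun s => u (s + 1)) t := by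
  induction t with
  | zero => rfl
  | succ t ih => rw [sol, ih]; rfl

lemma lsol_shift {nt m : ℕ} (A : Matrix (Fin nt) (Fin nt) ℝ) (B : Matrix (Fin nt) (Fin m) ℝ)
    (z : Fin nt → ℝ) (u : ℕ → Fin m → ℝ) (t : ℕ) :
    lsol A B z u (t + 1) = lsol A B (A.mulVec z + B.mulVec (u 0)) (fun s => u (s + 1)) t := by
  induction t with
  | zero => rfl
  | succ t ih => rw [lsol, ih]; rfl

lemma lsol_zero {nt m : ℕ} (A : Matrix (Fin nt) (Fin nt) ℝ) (B : Matrix (Fin nt) (Fin m) ℝ)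
    (z : Fin nt → ℝ) (t : ℕ) :
    lsol A B z (fun _ => 0) t = (A ^ t).mulVec z := by
  induction t with
  | zero => simp [lsol]
  | succ t ih =>
    simp only [lsol, ih, Matrix.mulVec_zero, add_zero, Matrix.mulVec_mulVec, pow_succ']

theorem stmt8 {n m nt : ℕ} (f : (Fin n → ℝ) → (Fin m → ℝ) → (Fin n → ℝ))
    (T : (Fin n → ℝ) → (Fin nt → ℝ))
    (A : Matrix (Fin nt) (Fin nt) ℝ) (B : Matrix (Fin nt) (Fin m) ℝ)
    (C : Matrix (Fin n) (Fin nt) ℝ)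
    (himm : ∀ (x : Fin n → ℝ) (u : ℕ → Fin m → ℝ) (t : ℕ),
      sol f x u t = C.mulVec (lsol A B (T x) u t)) :
    ∀ (k : ℕ) (x : Fin n → ℝ) (u : Fin m → ℝ),
      (C * A ^ k).mulVec (A.mulVec (T x) + B.mulVec u - T (f x u)) = 0 := by
  intro k x u
  set v : ℕ → Fin m → ℝ := fun t => if t = 0 then u else 0 with hv
  have hshift : (fun s => v (s + 1)) = (fun _ => (0 : Fin m → ℝ)) := by
    funext s; simp [hv]
  have h1 : sol f x v (k + 1) = C.mulVec ((A ^ k).mulVec (A.mulVec (T x) + B.mulVec u)) := by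
    rw [himm, lsol_shift, hshift, lsol_zero]
    simp [hv]
  have h2 : sol f x v (k + 1) = C.mulVec ((A ^ k).mulVec (T (f x u))) := by
    rw [sol_shift]
    have : v 0 = u := by simp [hv]
    rw [this, hshift, himm, lsol_zero]
  rw [Matrix.mulVec_mulVec] at h1 h2
  rw [Matrix.mulVec_sub, ← h1, ← h2, sub_self]
end

section
/- Suppose T, A, B, C, K satisfy T(f(x,u)) = A T(x) + B u, C T(x) = x for all (x,u). Let X̃_f = {x̃ ∈ ℝ^{ñ} : C(A+BK)^k x̃ ∈ X and K(A+BK)^k x̃ ∈ U for all k ≥ 0} and X_f = T^{-1}(X̃_f). Then X_f is invariant for the closed-loop system x⁺ = f(x, K T(x)) with admissible state and input: for any x ∈ X_f, letting g(x) = f(x, K T(x)), one has g(x) ∈ X_f, x ∈ X, and K T(x) ∈ U. -/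
open Matrix

theorem stmt13 {n m nt : ℕ} (f : (Fin n → ℝ) → (Fin m → ℝ) → (Fin n → ℝ))
    (T : (Fin n → ℝ) → (Fin nt → ℝ))
    (A : Matrix (Fin nt) (Fin nt) ℝ) (B : Matrix (Fin nt) (Fin m) ℝ)
    (C : Matrix (Fin n) (Fin nt) ℝ) (K : Matrix (Fin m) (Fin nt) ℝ)
    (X : Set (Fin n → ℝ)) (U : Set (Fin m → ℝ))
    (hTf : ∀ x u, T (f x u) = A.mulVec (T x) + B.mulVec u)
    (hCT : ∀ x, C.mulVec (T x) = x)
    (Xtf : Set (Fin nt → ℝ))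
    (hXtf : Xtf = {xt | ∀ k : ℕ,
      C.mulVec (((A + B * K) ^ k).mulVec xt) ∈ X
      ∧ K.mulVec (((A + B * K) ^ k).mulVec xt) ∈ U})
    (Xf : Set (Fin n → ℝ)) (hXf : Xf = T ⁻¹' Xtf) :
    ∀ x ∈ Xf, f x (K.mulVec (T x)) ∈ Xf ∧ x ∈ X ∧ K.mulVec (T x) ∈ U := by
  subst hXtf hXf
  intro x hx
  have hx' : ∀ k : ℕ, C.mulVec (((A + B * K) ^ k).mulVec (T x)) ∈ X
      ∧ K.mulVec (((A + B * K) ^ k).mulVec (T x)) ∈ U := hx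
  have hkey : T (f x (K.mulVec (T x))) = (A + B * K).mulVec (T x) := by
    rw [hTf, Matrix.add_mulVec, Matrix.mulVec_mulVec]
  refine ⟨?_, ?_, ?_⟩
  · intro k
    have : ((A + B * K) ^ k).mulVec (T (f x (K.mulVec (T x))))
        = ((A + B * K) ^ (k + 1)).mulVec (T x) := by
      rw [hkey, Matrix.mulVec_mulVec, ← pow_succ]
    rw [this]
    exact hx' (k + 1)
  · have h0 := (hx' 0).1
    simpa [Matrix.one_mulVec, hCT] using h0
  · have h0 := (hx' 0).2
    simpa [Matrix.one_mulVec] using h0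
end

section
/- Suppose T, A, B, C satisfy T(f(x,u)) = A T(x) + B u and C T(x) = x for all (x,u), and let Q ⪰ 0, R ≻ 0. Then for any initial state x(0) and control sequence u, the nonlinear LQ cost Σ_{t=0}^{N} (x(t)ᵀ Q x(t) + u(t)ᵀ R u(t)) along x(t+1) = f(x(t),u(t)) equals the linear LQ cost Σ_{t=0}^{N} (x̃(t)ᵀ Cᵀ Q C x̃(t) + u(t)ᵀ R u(t)) along x̃(t+1) = A x̃(t) + B u(t) with x̃(0) = T(x(0)). -/
open Matrix Finset

theorem stmt16 {n m nt : ℕ} (f : (Fin n → ℝ) → (Fin m → ℝ) → (Fin n → ℝ))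
    (T : (Fin n → ℝ) → (Fin nt → ℝ))
    (A : Matrix (Fin nt) (Fin nt) ℝ) (B : Matrix (Fin nt) (Fin m) ℝ)
    (C : Matrix (Fin n) (Fin nt) ℝ)
    (Q : Matrix (Fin n) (Fin n) ℝ) (R : Matrix (Fin m) (Fin m) ℝ)
    (hQ : Q.PosSemidef) (hR : R.PosDef)
    (hTf : ∀ x u, T (f x u) = A.mulVec (T x) + B.mulVec u)
    (hCT : ∀ x, C.mulVec (T x) = x) :
    ∀ (x : Fin n → ℝ) (u : ℕ → Fin m → ℝ) (N : ℕ),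
      ∑ t ∈ range (N + 1),
        (dotProduct (sol f x u t) (Q.mulVec (sol f x u t))
          + dotProduct (u t) (R.mulVec (u t)))
      = ∑ t ∈ range (N + 1),
        (dotProduct (lsol A B (T x) u t) ((Cᵀ * Q * C).mulVec (lsol A B (T x) u t))
          + dotProduct (u t) (R.mulVec (u t))) := by
  intro x u N
  have key : ∀ t, lsol A B (T x) u t = T (sol f x u t) := by
    intro t
    induction t with
    | zero => rfl
    | succ t ih => simp [lsol, sol, hTf, ih]
  refine Finset.sum_congr rfl fun t _ => ?_
  rw [key]
  have : (Cᵀ * Q * C).mulVec (T (sol f x u t))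
      = Cᵀ.mulVec (Q.mulVec (C.mulVec (T (sol f x u t)))) := by
    rw [← mulVec_mulVec, ← mulVec_mulVec]
  rw [this, hCT, dotProduct_mulVec _ Cᵀ, vecMul_transpose, hCT]
end
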